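/- arXiv:2111.00650 — 5 statements merged into one kernel-verified Lean document; each statement's English description precedes it below -/
import Mathlib

section
/- Let P be a non-constant complex polynomial that is non-vanishing on the open right half plane H₊ = {z : Re z > 0}. Then for every z ∈ H₊, Re(P'(z)/P(z)) > 0; in particular P' is non-vanishing on H₊. -/
open Polynomial

lemma logderiv_prod_aux (z : ℂ) (s : Multiset ℂ) (hz : ∀ r ∈ s, z ≠ r) :
    (Polynomial.derivative (s.map (fun r => X - C r)).prod).eval z /
      ((s.map (fun r => X - C r)).prod).eval z
      = (s.map (fun r => (z - r)⁻¹)).sum := by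
  induction s using Multiset.induction with
  | empty => simp
  | cons r t ih =>
    have hzr : z - r ≠ 0 := sub_ne_zero.mpr (hz r (Multiset.mem_cons_self r t))
    have ht : ∀ x ∈ t, z ≠ x := fun x hx => hz x (Multiset.mem_cons_of_mem hx)
    have hQ : ((t.map (fun r => X - C r)).prod).eval z ≠ 0 := by
      rw [Polynomial.eval_multiset_prod]
      apply Multiset.prod_ne_zero
      intro hq
      rw [Multiset.map_map] at hq
      obtain ⟨x, hx, hx'⟩ := Multiset.mem_map.mp hq
      exact sub_ne_zero.mpr (ht x hx) (by simpa using hx')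
    simp only [Multiset.map_cons, Multiset.prod_cons, Multiset.sum_cons]
    rw [derivative_mul]
    simp only [derivative_sub, derivative_X, derivative_C, sub_zero, one_mul,
      eval_add, eval_mul, eval_sub, eval_X, eval_C]
    rw [← ih ht]
    field_simp

/-- Strong Gauss–Lucas theorem: if a non-constant complex polynomial `P` has no
zeros in the open right half plane, then `Re (P'(z)/P(z)) > 0` there; in
particular `P'` has no zeros in the open right half plane. -/
theorem strong_gauss_lucas (P : Polynomial ℂ) (hdeg : 1 ≤ P.natDegree)
    (hP : ∀ z : ℂ, 0 < z.re → P.eval z ≠ 0) :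
    ∀ z : ℂ, 0 < z.re →
      0 < ((Polynomial.derivative P).eval z / P.eval z).re ∧
        (Polynomial.derivative P).eval z ≠ 0 := by
  intro z hz
  have hP0 : P ≠ 0 := fun h => by simp [h] at hdeg
  have hcard : Multiset.card P.roots = P.natDegree :=
    (Polynomial.splits_iff_card_roots).mp (IsAlgClosed.splits P)
  have hfac := Polynomial.C_leadingCoeff_mul_prod_multiset_X_sub_C (p := P) hcard
  have hzroot : ∀ r ∈ P.roots, z ≠ r := by
    intro r hr he
    exact hP z hz (he ▸ (Polynomial.isRoot_of_mem_roots hr))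
  have hlog : (Polynomial.derivative P).eval z / P.eval z
      = (P.roots.map (fun r => (z - r)⁻¹)).sum := by
    conv_lhs => rw [← hfac]
    rw [derivative_mul, derivative_C, zero_mul, zero_add, eval_mul, eval_mul, eval_C]
    have hlc : P.leadingCoeff ≠ 0 := Polynomial.leadingCoeff_ne_zero.mpr hP0
    rw [mul_div_mul_left _ _ hlc]
    exact logderiv_prod_aux z P.roots hzroot
  have hre : ((Polynomial.derivative P).eval z / P.eval z).re
      = (P.roots.map (fun r => ((z - r)⁻¹).re)).sum := by
    rw [hlog]
    rw [show ((P.roots.map (fun r => (z - r)⁻¹)).sum).re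
        = Complex.reAddGroupHom ((P.roots.map (fun r => (z - r)⁻¹)).sum) from rfl,
      map_multiset_sum, Multiset.map_map]
    rfl
  have hpos : ∀ r ∈ P.roots, 0 < ((z - r)⁻¹).re := by
    intro r hr
    have hrroot : P.eval r = 0 := Polynomial.isRoot_of_mem_roots hr
    have hrle : r.re ≤ 0 := by
      by_contra h
      exact hP r (lt_of_not_ge h) hrroot
    have h1 : 0 < (z - r).re := by simp [Complex.sub_re]; linarith
    have h2 : z - r ≠ 0 := sub_ne_zero.mpr (hzroot r hr)
    rw [Complex.inv_re]
    exact div_pos h1 (Complex.normSq_pos.mpr h2)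
  have hne : P.roots ≠ 0 := by
    intro h
    rw [h] at hcard
    simp at hcard
    omega
  obtain ⟨r, hr⟩ := Multiset.exists_mem_of_ne_zero hne
  obtain ⟨t, heq⟩ := Multiset.exists_cons_of_mem hr
  have hsum : 0 < ((Polynomial.derivative P).eval z / P.eval z).re := by
    rw [hre, heq, Multiset.map_cons, Multiset.sum_cons]
    have h1 : 0 < ((z - r)⁻¹).re := hpos r hr
    have h2 : 0 ≤ (t.map (fun r => ((z - r)⁻¹).re)).sum := by
      apply Multiset.sum_nonneg
      intro x hx
      obtain ⟨y, hy, rfl⟩ := Multiset.mem_map.mp hx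
      exact le_of_lt (hpos y (heq ▸ Multiset.mem_cons_of_mem hy))
    linarith
  refine ⟨hsum, fun h => ?_⟩
  rw [h, zero_div] at hsum
  simp at hsum
end

section
/- If a non-constant complex polynomial P has no zeros in some open half plane H ⊂ ℂ, then P' has no zeros in H either. Consequently, the zeros of P' lie in the convex hull of the zeros of P. -/
open Polynomial

lemma gl_key (P : Polynomial ℂ) (hdeg : 1 ≤ P.natDegree) (z : ℂ) (hz : P.eval z ≠ 0)
    (hz' : (Polynomial.derivative P).eval z = 0) :
    (P.roots.map fun a => (z - a)⁻¹).sum = 0 := by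
  have hP0 : P ≠ 0 := fun h => by simp [h] at hdeg
  have hlc : P.leadingCoeff ≠ 0 := leadingCoeff_ne_zero.2 hP0
  have hsplit : P.Splits := IsAlgClosed.splits P
  have hP := (C_leadingCoeff_mul_prod_multiset_X_sub_C (splits_iff_card_roots.1 hsplit)).symm
  set s := P.roots with hs
  have hzne : ∀ a ∈ s, z - a ≠ 0 := by
    intro a ha
    have : P.eval a = 0 := (mem_roots hP0).1 ha
    intro h
    exact hz (by rw [sub_eq_zero.1 h]; exact this)
  set Q : ℂ := (s.map fun a => z - a).prod with hQ
  have hQeval : P.eval z = P.leadingCoeff * Q := by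
    conv_lhs => rw [hP]
    simp [hQ, eval_multiset_prod, Multiset.map_map, Function.comp]
  have hQne : Q ≠ 0 := by
    intro h
    exact hz (by rw [hQeval, h, mul_zero])
  have hder : (Polynomial.derivative P).eval z
      = P.leadingCoeff * (s.map fun a => ((s.erase a).map fun b => z - b).prod).sum := by
    conv_lhs => rw [hP]
    rw [derivative_mul, derivative_C, zero_mul, zero_add, eval_mul, eval_C]
    congr 1
    rw [derivative_prod]
    rw [show eval z ((Multiset.map (fun i => (Multiset.map (fun a => X - C a) (s.erase i)).prod * Polynomial.derivative (X - C i)) s)).sum = _ from map_multiset_sum (evalRingHom z) _, Multiset.map_map]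
    congr 1
    apply Multiset.map_congr rfl
    intro a _
    simp [eval_multiset_prod, Multiset.map_map, Function.comp]
  have herase : ∀ a ∈ s, ((s.erase a).map fun b => z - b).prod = Q * (z - a)⁻¹ := by
    intro a ha
    have h1 : Q = (z - a) * ((s.erase a).map fun b => z - b).prod := by
      conv_lhs => rw [hQ, ← Multiset.cons_erase ha]
      rw [Multiset.map_cons, Multiset.prod_cons]
    rw [h1, mul_comm (z - a), mul_assoc, mul_inv_cancel₀ (hzne a ha), mul_one]
  have hsum : (s.map fun a => ((s.erase a).map fun b => z - b).prod).sum
      = Q * (s.map fun a => (z - a)⁻¹).sum := by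
    rw [Multiset.map_congr rfl herase]
    rw [← Multiset.sum_map_mul_left]
  rw [hder, hsum] at hz'
  rcases mul_eq_zero.1 hz' with h | h
  · exact absurd h hlc
  rcases mul_eq_zero.1 h with h | h
  · exact absurd h hQne
  exact h

/-- If a non-constant complex polynomial `P` has no zeros in some open half
plane, then neither does `P'`; consequently the zeros of `P'` lie in the convex
hull of the zeros of `P`. -/
theorem gauss_lucas (P : Polynomial ℂ) (hdeg : 1 ≤ P.natDegree) :
    (∀ (θ : ℝ) (c : ℂ),
        (∀ z : ℂ, 0 < (Complex.exp (θ * Complex.I) * (z - c)).re → P.eval z ≠ 0) →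
        ∀ z : ℂ, 0 < (Complex.exp (θ * Complex.I) * (z - c)).re →
          (Polynomial.derivative P).eval z ≠ 0) ∧
      (∀ w : ℂ, (Polynomial.derivative P).eval w = 0 →
        w ∈ convexHull ℝ {z : ℂ | P.eval z = 0}) := by
  have hP0 : P ≠ 0 := fun h => by simp [h] at hdeg
  have hcard : Multiset.card P.roots = P.natDegree :=
    splits_iff_card_roots.1 (IsAlgClosed.splits P)
  have hroots0 : P.roots ≠ 0 := by
    intro h
    rw [h] at hcard
    simp at hcard
    omega
  constructor
  · intro θ c h z hzH hd
    have hz : P.eval z ≠ 0 := h z hzH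
    have hsum := gl_key P hdeg z hz hd
    set u := Complex.exp (θ * Complex.I) with hu
    have hT : (P.roots.map fun a => ((starRingEnd ℂ) u * (z - a)⁻¹).re).sum = 0 := by
      have h1 : ((starRingEnd ℂ) u * (P.roots.map fun a => (z - a)⁻¹).sum).re = 0 := by
        rw [hsum, mul_zero, Complex.zero_re]
      rw [← h1, ← Multiset.sum_map_mul_left]
      rw [show ∀ s : Multiset ℂ, s.sum.re = (s.map Complex.re).sum from
        fun s => (map_multiset_sum Complex.reAddGroupHom s :), Multiset.map_map]
      rfl
    have hpos : 0 < (P.roots.map fun a => ((starRingEnd ℂ) u * (z - a)⁻¹).re).sum := by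
      have h0 : (P.roots.map fun _ : ℂ => (0:ℝ)).sum = 0 := by simp
      have hlt := Multiset.sum_lt_sum_of_nonempty (s := P.roots) (f := fun _ : ℂ => (0:ℝ))
        (g := fun a => ((starRingEnd ℂ) u * (z - a)⁻¹).re) (by simpa using hroots0) ?_
      · rwa [h0] at hlt
      · intro a ha
        have haroot : P.eval a = 0 := (mem_roots hP0).1 ha
        have h2 : ¬ 0 < (u * (a - c)).re := fun hc => h a hc haroot
        have h3 : 0 < (u * (z - a)).re := by
          have he : u * (z - a) = u * (z - c) - u * (a - c) := by ring
          rw [he, Complex.sub_re]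
          have := not_lt.1 h2
          linarith
        have hza : z - a ≠ 0 := by
          intro hzz
          exact hz (by rw [sub_eq_zero.1 hzz]; exact haroot)
        have heq : ((starRingEnd ℂ) u * (z - a)⁻¹).re
            = (Complex.normSq (z - a))⁻¹ * (u * (z - a)).re := by
          rw [Complex.inv_def]
          have h4 : (starRingEnd ℂ) u * ((starRingEnd ℂ) (z - a) * (((Complex.normSq (z - a))⁻¹ : ℝ) : ℂ))
              = (((Complex.normSq (z - a))⁻¹ : ℝ) : ℂ) * (starRingEnd ℂ) (u * (z - a)) := by
            rw [map_mul]
            push_cast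
            ring
          rw [h4, Complex.re_ofReal_mul, Complex.conj_re]
        show (0:ℝ) < ((starRingEnd ℂ) u * (z - a)⁻¹).re
        rw [heq]
        exact mul_pos (inv_pos.2 (Complex.normSq_pos.2 hza)) h3
    rw [hT] at hpos
    exact lt_irrefl 0 hpos
  · intro w hw
    by_cases hPw : P.eval w = 0
    · exact subset_convexHull ℝ _ hPw
    have hsum := gl_key P hdeg w hPw hw
    set L := P.roots.toList with hL
    have hcoe : P.roots = ↑L := (Multiset.coe_toList _).symm
    have hLlen : 0 < L.length := by
      rw [hL, Multiset.length_toList, hcard]; omega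
    have : Nonempty (Fin L.length) := ⟨⟨0, hLlen⟩⟩
    have hroot : ∀ i : Fin L.length, P.eval L[i.1] = 0 := by
      intro i
      have h1 : L[i.1] ∈ L := List.getElem_mem _
      exact (mem_roots hP0).1 (Multiset.mem_toList.1 h1)
    have hwne : ∀ i : Fin L.length, w - L[i.1] ≠ 0 := by
      intro i hzz
      exact hPw (by rw [sub_eq_zero.1 hzz]; exact hroot i)
    set t : Fin L.length → ℝ := fun i => (Complex.normSq (w - L[i.1]))⁻¹ with hts
    have ht : ∀ i, 0 < t i := fun i => inv_pos.2 (Complex.normSq_pos.2 (hwne i))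
    have hTpos : 0 < ∑ i, t i := Finset.sum_pos (fun i _ => ht i) Finset.univ_nonempty
    have hsum' : (∑ i : Fin L.length, (w - L[i.1])⁻¹) = 0 := by
      rw [Fin.sum_univ_fun_getElem L fun a => (w - a)⁻¹]
      rw [hcoe, Multiset.map_coe, Multiset.sum_coe] at hsum
      exact hsum
    have hkey : ∑ i, (t i : ℂ) * (w - L[i.1]) = 0 := by
      have hc := congrArg (starRingEnd ℂ) hsum'
      rw [map_sum, map_zero] at hc
      rw [← hc]
      apply Finset.sum_congr rfl
      intro i _
      simp only [Complex.inv_def, map_mul, map_inv₀, Complex.conj_conj, Complex.conj_ofReal]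
      push_cast [hts]
      ring
    have hkey2 : ∑ i, t i • (L[i.1] : ℂ) = (∑ i, t i) • w := by
      have h5 : ∑ i, (t i : ℂ) * w - ∑ i, (t i : ℂ) * L[i.1] = 0 := by
        rw [← Finset.sum_sub_distrib, ← hkey]
        apply Finset.sum_congr rfl
        intro i _
        ring
      have h6 : ∑ i, (t i : ℂ) * L[i.1] = (∑ i, (t i : ℂ)) * w := by
        rw [Finset.sum_mul]
        have := sub_eq_zero.1 h5
        rw [← this]
      simp only [Complex.real_smul]
      rw [h6]
      push_cast
      ring
    have hcm : Finset.univ.centerMass t (fun i : Fin L.length => (L[i.1] : ℂ)) = w := by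
      rw [Finset.centerMass, hkey2, smul_smul, inv_mul_cancel₀ hTpos.ne', one_smul]
    rw [← hcm]
    exact Finset.centerMass_mem_convexHull _ (fun i _ => (ht i).le) hTpos (fun i _ => hroot i)
end

section
/- Let g_n be a sequence of analytic functions on a connected open set Ω ⊆ ℂ with Re(g_n(z)) ≥ 0 for all n and all z ∈ Ω. If g_n converges pointwise on a subset of Ω having a limit point in Ω, then g_n converges uniformly on compact subsets of Ω to an analytic function. (Vitali-type theorem under a one-sided bound on real parts.) -/
open Metric Set Filter Complex Topology

/-- Möbius-type inequality: if both real parts are positive,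
`(u - v)` is shorter than `(u + conj v)`. -/
lemma mobius_lt {u v : ℂ} (hu : 0 < u.re) (hv : 0 < v.re) :
    ‖u - v‖ < ‖u + starRingEnd ℂ v‖ := by
  have h1 : Complex.normSq (u - v) < Complex.normSq (u + starRingEnd ℂ v) := by
    simp only [Complex.normSq_apply, Complex.sub_re, Complex.sub_im, Complex.add_re,
      Complex.add_im, Complex.conj_re, Complex.conj_im]
    nlinarith [mul_pos hu hv]
  have h2 : ‖u - v‖ < ‖u + starRingEnd ℂ v‖ := by
    rw [Complex.norm_def, Complex.norm_def]
    exact Real.sqrt_lt_sqrt (Complex.normSq_nonneg _) h1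
  exact h2

/-- Harnack/Borel–Carathéodory type bound: a holomorphic function with
nonnegative real part on a ball is bounded by `3` times its value at the center
on the half-radius ball. -/
lemma halfplane_bound {f : ℂ → ℂ} {c : ℂ} {R : ℝ}
    (hd : DifferentiableOn ℂ f (ball c R)) (hre : ∀ z ∈ ball c R, 0 ≤ (f z).re) :
    ∀ z ∈ ball c (R / 2), ‖f z‖ ≤ 3 * ‖f c‖ := by
  intro z hz
  have hR : 0 < R := by
    rcases (nonempty_ball.1 ⟨z, hz⟩) with h
    linarith
  have hcball : c ∈ ball c R := mem_ball_self hR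
  have hzball : z ∈ ball c R := ball_subset_ball (by linarith) hz
  have key : ∀ ε : ℝ, 0 < ε → ‖f z‖ ≤ 3 * ‖f c‖ + 4 * ε := by
    intro ε hε
    set a : ℂ := f c + ε with ha
    have hare : 0 < a.re := by
      have := hre c hcball
      simp [ha]; positivity
    set φ : ℂ → ℂ := fun w => (f w + ε - a) / (f w + ε + starRingEnd ℂ a) with hφ
    have hden : ∀ w ∈ ball c R, f w + ε + starRingEnd ℂ a ≠ 0 := by
      intro w hw
      have h1 : 0 < (f w + ε + starRingEnd ℂ a).re := by
        have := hre w hw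
        simp only [Complex.add_re, Complex.conj_re, Complex.ofReal_re]
        linarith [hare]
      intro h; rw [h] at h1; simp at h1
    have hφd : DifferentiableOn ℂ φ (ball c R) := by
      apply DifferentiableOn.div
      · exact ((hd.add_const _).sub_const _)
      · exact ((hd.add_const _).add_const _)
      · exact hden
    have hφc : φ c = 0 := by simp [hφ, ha]
    have hmaps : MapsTo φ (ball c R) (ball (φ c) 1) := by
      intro w hw
      rw [hφc, mem_ball, dist_zero_right]
      have h1 : 0 < (f w + ε).re := by
        have := hre w hw
        simp only [Complex.add_re, Complex.ofReal_re]; linarith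
      have h2 := mobius_lt h1 hare
      have h3 : (0:ℝ) < ‖f w + ε + starRingEnd ℂ a‖ := by
        have := norm_nonneg (f w + ε - a); linarith
      rw [hφ]
      simp only [norm_div]
      rw [div_lt_one h3]
      exact h2
    have hsch := Complex.dist_le_div_mul_dist_of_mapsTo_ball hφd (hmaps.mono_right ball_subset_closedBall) hzball
    rw [hφc, dist_zero_right] at hsch
    have hφz : ‖φ z‖ ≤ 1 / 2 := by
      have hdz : dist z c < R / 2 := mem_ball.1 hz
      calc ‖φ z‖ ≤ 1 / R * dist z c := hsch
        _ ≤ 1 / R * (R / 2) := by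
            apply mul_le_mul_of_nonneg_left (le_of_lt hdz) (by positivity)
        _ = 1 / 2 := by field_simp
    -- solve for f z + ε
    have hsolve : (f z + ε) * (1 - φ z) = a + φ z * starRingEnd ℂ a := by
      have hd0 := hden z hzball
      rw [hφ]
      field_simp
      ring
    have h1φ : (1:ℝ) / 2 ≤ ‖1 - φ z‖ := by
      have := norm_sub_norm_le (1 : ℂ) (φ z)
      simp only [norm_one] at this
      linarith
    have hnorm : ‖f z + (ε:ℂ)‖ * ‖1 - φ z‖ ≤ ‖a‖ * (3 / 2) := by
      rw [← norm_mul, hsolve]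
      calc ‖a + φ z * starRingEnd ℂ a‖ ≤ ‖a‖ + ‖φ z‖ * ‖a‖ := by
            refine (norm_add_le _ _).trans ?_
            simp [norm_mul]
        _ ≤ ‖a‖ * (3 / 2) := by nlinarith [norm_nonneg a, norm_nonneg (φ z)]
    have hfz : ‖f z + (ε:ℂ)‖ ≤ 3 * ‖a‖ := by
      nlinarith [norm_nonneg (f z + (ε:ℂ)), norm_nonneg (1 - φ z),
        mul_le_mul_of_nonneg_left h1φ (norm_nonneg (f z + (ε:ℂ)))]
    have h5 : ‖f z‖ ≤ ‖f z + (ε:ℂ)‖ + ε := by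
      have h51 : ‖f z‖ ≤ ‖f z + (ε:ℂ)‖ + ‖(ε:ℂ)‖ := by
        calc ‖f z‖ = ‖(f z + (ε:ℂ)) - (ε:ℂ)‖ := by ring_nf
          _ ≤ ‖f z + (ε:ℂ)‖ + ‖(ε:ℂ)‖ := norm_sub_le _ _
      have he : ‖(ε:ℂ)‖ = ε := by
        rw [Complex.norm_real, Real.norm_eq_abs, abs_of_pos hε]
      linarith
    have h6 : ‖a‖ ≤ ‖f c‖ + ε := by
      rw [ha]
      refine (norm_add_le _ _).trans ?_
      have he : ‖(ε:ℂ)‖ = ε := by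
        rw [Complex.norm_real, Real.norm_eq_abs, abs_of_pos hε]
      simp only [he]
      exact le_of_eq rfl
    linarith
  have : ∀ η > (0:ℝ), ‖f z‖ ≤ 3 * ‖f c‖ + η := by
    intro η hη
    have := key (η / 4) (by linarith)
    linarith
  exact le_of_forall_pos_le_add this

/-- Iterated difference quotients (Newton divided-difference remainders). -/
noncomputable def newtonD (f g : ℂ → ℂ) (s : ℕ → ℂ) : ℕ → ℂ → ℂ
  | 0 => fun z => f z - g z
  | (j+1) => dslope (newtonD f g s j) (s j)

lemma local_uniform_cauchy {f : ℕ → ℂ → ℂ} {c : ℂ} {R M : ℝ} (hR : 0 < R)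
    (hd : ∀ n, DifferentiableOn ℂ (f n) (ball c R))
    (hb : ∀ n, ∀ z ∈ ball c R, ‖f n z‖ ≤ M)
    {T : Set ℂ} (hT : ∀ z ∈ T, ∃ l, Tendsto (fun n => f n z) atTop (𝓝 l))
    {t : ℂ} (htc : dist t c < R / 16) (hacc : t ∈ closure (T \ {t})) :
    UniformCauchySeqOn f atTop (ball c (R / 16)) := by
  have hM : 0 ≤ M := le_trans (norm_nonneg _) (hb 0 c (mem_ball_self hR))
  -- a sequence of distinct points of `T` approaching `t`
  have hex : ∀ δ : ℝ, 0 < δ → ∃ x, x ∈ T ∧ x ≠ t ∧ dist x t < δ := by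
    intro δ hδ
    rcases Metric.mem_closure_iff.1 hacc δ hδ with ⟨x, hx, hxd⟩
    exact ⟨x, hx.1, by simpa using hx.2, by rwa [dist_comm]⟩
  have hstep : ∀ p : {x : ℂ // x ∈ T ∧ x ≠ t ∧ dist x t < R / 16},
      ∃ q : {x : ℂ // x ∈ T ∧ x ≠ t ∧ dist x t < R / 16},
        dist (q : ℂ) t < dist (p : ℂ) t := by
    rintro ⟨x, hx1, hx2, hx3⟩
    rcases hex (dist x t) (dist_pos.2 hx2) with ⟨y, hy1, hy2, hy3⟩
    exact ⟨⟨y, hy1, hy2, hy3.trans hx3⟩, hy3⟩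
  choose next hnext using hstep
  rcases hex (R / 16) (by linarith) with ⟨x0, hx01, hx02, hx03⟩
  set seq : ℕ → {x : ℂ // x ∈ T ∧ x ≠ t ∧ dist x t < R / 16} :=
    fun j => next^[j] ⟨x0, hx01, hx02, hx03⟩ with hseq
  set s : ℕ → ℂ := fun j => (seq j : ℂ) with hs
  have hsT : ∀ j, s j ∈ T := fun j => (seq j).2.1
  have hst : ∀ j, dist (s j) t < R / 16 := fun j => (seq j).2.2.2
  have hdec : ∀ j, dist (s (j + 1)) t < dist (s j) t := by
    intro j
    have h1 : seq (j + 1) = next (seq j) := Function.iterate_succ_apply' _ _ _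
    have h2 : s (j + 1) = (next (seq j) : ℂ) := congrArg Subtype.val h1
    have h3 : dist (s (j + 1)) t < dist ((seq j : ℂ)) t := by
      rw [h2]; exact hnext (seq j)
    exact h3
  have hanti : StrictAnti fun j => dist (s j) t := strictAnti_nat_of_succ_lt hdec
  have hdistinct : ∀ i l, l < i → s i ≠ s l := by
    intro i l hli heq
    have h2 : dist (s i) t < dist (s l) t := hanti hli
    rw [heq] at h2
    exact lt_irrefl _ h2
  have hsc : ∀ j, dist (s j) c < R / 8 := by
    intro j
    calc dist (s j) c ≤ dist (s j) t + dist t c := dist_triangle _ _ _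
      _ < R / 16 + R / 16 := add_lt_add (hst j) htc
      _ = R / 8 := by ring
  -- the divided-difference functions
  set D : ℕ × ℕ → ℕ → ℂ → ℂ := fun p => newtonD (f p.1) (f p.2) s with hD
  have hD0 : ∀ p z, D p 0 z = f p.1 z - f p.2 z := fun _ _ => rfl
  have hDsucc : ∀ p j, D p (j + 1) = dslope (D p j) (s j) := fun _ _ => rfl
  -- differentiability
  have hDd : ∀ p j, DifferentiableOn ℂ (D p j) (ball c R) := by
    intro p j
    induction j with
    | zero => exact (hd p.1).sub (hd p.2)
    | succ j ih =>
      rw [hDsucc]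
      refine (differentiableOn_dslope ?_).mpr ih
      exact isOpen_ball.mem_nhds (mem_ball.2 ((hsc j).trans (by linarith)))
  -- uniform bounds via the maximum principle
  set B : ℕ → ℝ := fun j => 2 * M * (16 / (5 * R)) ^ j with hB
  have hDb : ∀ p j, ∀ w ∈ closedBall c (3 * R / 4), ‖D p j w‖ ≤ B j := by
    intro p j
    induction j with
    | zero =>
      intro w hw
      have hw' : w ∈ ball c R := lt_of_le_of_lt (mem_closedBall.1 hw) (by linarith)
      rw [hD0, hB]
      simp only [pow_zero, mul_one]
      calc ‖f p.1 w - f p.2 w‖ ≤ ‖f p.1 w‖ + ‖f p.2 w‖ := norm_sub_le _ _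
        _ ≤ 2 * M := by linarith [hb p.1 w hw', hb p.2 w hw']
    | succ j ih =>
      have hfr : ∀ w ∈ sphere c (3 * R / 4), ‖D p (j + 1) w‖ ≤ B (j + 1) := by
        intro w hw
        have hwc : dist w c = 3 * R / 4 := mem_sphere.1 hw
        have hne : w ≠ s j := by
          intro h
          rw [h] at hwc
          linarith [hsc j]
        have hws : 5 * R / 8 ≤ ‖w - s j‖ := by
          have h1 : dist w c ≤ dist w (s j) + dist (s j) c := dist_triangle _ _ _
          have h2 : dist w (s j) = ‖w - s j‖ := dist_eq_norm _ _
          linarith [hsc j]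
        have hnum : ‖D p j w - D p j (s j)‖ ≤ 2 * B j := by
          have h1 : ‖D p j w‖ ≤ B j := ih w (mem_closedBall.2 (le_of_eq hwc))
          have h2 : ‖D p j (s j)‖ ≤ B j :=
            ih (s j) (mem_closedBall.2 (le_of_lt ((hsc j).trans (by linarith))))
          calc ‖D p j w - D p j (s j)‖ ≤ ‖D p j w‖ + ‖D p j (s j)‖ := norm_sub_le _ _
            _ ≤ 2 * B j := by linarith
        have hBj : 0 ≤ B j := by positivity
        rw [hDsucc, dslope_of_ne _ hne, slope_def_field]
        rw [norm_div]
        calc ‖D p j w - D p j (s j)‖ / ‖w - s j‖ ≤ 2 * B j / (5 * R / 8) := by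
              apply div_le_div₀ (by positivity) hnum (by positivity) hws
          _ = B (j + 1) := by
              rw [hB]
              simp only [pow_succ]
              field_simp
              ring
      intro w hw
      have hcl : w ∈ closure (ball c (3 * R / 4)) := by
        rwa [closure_ball c (by positivity : (3 * R / 4 : ℝ) ≠ 0)]
      refine Complex.norm_le_of_forall_mem_frontier_norm_le isBounded_ball ?_ ?_ hcl
      · apply DifferentiableOn.diffContOnCl
        rw [closure_ball c (by positivity : (3 * R / 4 : ℝ) ≠ 0)]
        exact (hDd p (j + 1)).mono (closedBall_subset_ball (by linarith))
      · intro w' hw'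
        rw [frontier_ball c (by positivity : (3 * R / 4 : ℝ) ≠ 0)] at hw'
        exact hfr w' hw'
  -- Newton expansion
  have hNewton : ∀ p j z, f p.1 z - f p.2 z =
      (∑ i ∈ Finset.range j, D p i (s i) * ∏ l ∈ Finset.range i, (z - s l)) +
        D p j z * ∏ l ∈ Finset.range j, (z - s l) := by
    intro p j z
    induction j with
    | zero => simp [hD0]
    | succ j ih =>
      have key : D p j z = D p j (s j) + (z - s j) * D p (j + 1) z := by
        have h1 := sub_smul_dslope (D p j) (s j) z
        rw [smul_eq_mul] at h1
        rw [hDsucc]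
        linear_combination -h1
      rw [ih, key, Finset.sum_range_succ, Finset.prod_range_succ]
      ring
  -- convergence of the divided differences at points of `T`
  have hCV : ∀ i, ∀ w, w ∈ T → (∀ l, l < i → w ≠ s l) →
      Tendsto (fun p : ℕ × ℕ => D p i w) atTop (𝓝 0) := by
    intro i
    induction i with
    | zero =>
      intro w hw _
      rcases hT w hw with ⟨l, hl⟩
      rw [← prod_atTop_atTop_eq]
      have : Tendsto (fun p : ℕ × ℕ => f p.1 w - f p.2 w)
          ((atTop : Filter ℕ) ×ˢ (atTop : Filter ℕ)) (𝓝 (l - l)) :=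
        Tendsto.sub (hl.comp tendsto_fst) (hl.comp tendsto_snd)
      simpa [hD0] using this
    | succ i ih =>
      intro w hw hwne
      have hne : w ≠ s i := hwne i (Nat.lt_succ_self i)
      have heq : (fun p : ℕ × ℕ => D p (i + 1) w) =
          fun p : ℕ × ℕ => (D p i w - D p i (s i)) / (w - s i) := by
        funext p
        rw [hDsucc, dslope_of_ne _ hne, slope_def_field]
      rw [heq]
      have h1 := ih w hw (fun l hl => hwne l (hl.trans (Nat.lt_succ_self i)))
      have h2 := ih (s i) (hsT i) (fun l hl => hdistinct i l hl)
      have := (h1.sub h2).div_const (w - s i)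
      simpa using this
  -- conclusion
  rw [Metric.uniformCauchySeqOn_iff]
  intro ε hε
  -- pick the order `k` of the expansion
  have h35 : Tendsto (fun k : ℕ => (2 * M + 1) * (3 / 5 : ℝ) ^ k) atTop (𝓝 0) := by
    have := tendsto_pow_atTop_nhds_zero_of_lt_one (by norm_num : (0:ℝ) ≤ 3/5)
      (by norm_num : (3/5 : ℝ) < 1)
    simpa using this.const_mul (2 * M + 1)
  have hk : ∃ k : ℕ, (2 * M + 1) * (3 / 5 : ℝ) ^ k < ε / 2 := by
    rcases (h35.eventually (eventually_lt_nhds (by linarith : (0:ℝ) < ε / 2))).exists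
      with ⟨k, hk⟩
    exact ⟨k, hk⟩
  rcases hk with ⟨k, hk⟩
  set C : ℝ := (max 1 (3 * R / 16)) ^ k with hC
  have hC1 : (1:ℝ) ≤ C := by
    rw [hC]
    calc (1:ℝ) = 1 ^ k := (one_pow k).symm
      _ ≤ (max 1 (3 * R / 16)) ^ k := pow_le_pow_left₀ zero_le_one (le_max_left _ _) _
  have hC0 : (0:ℝ) < C := lt_of_lt_of_le one_pos hC1
  set ε2 : ℝ := ε / (2 * (k + 1) * C) with hε2
  have hε2pos : 0 < ε2 := by
    rw [hε2]; positivity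
  -- eventually, all `k` Newton coefficients are `< ε2`
  have hev : ∀ᶠ p : ℕ × ℕ in atTop, ∀ i ∈ Finset.range k, ‖D p i (s i)‖ < ε2 := by
    rw [Filter.eventually_all_finset]
    intro i _
    have h1 := hCV i (s i) (hsT i) (fun l hl => hdistinct i l hl)
    have := Metric.tendsto_nhds.mp h1 ε2 hε2pos
    simpa [dist_zero_right] using this
  rcases Filter.eventually_atTop.1 hev with ⟨⟨N1, N2⟩, hN⟩
  refine ⟨max N1 N2, fun m hm n hn z hz => ?_⟩
  have hp : (N1, N2) ≤ (m, n) :=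
    Prod.mk_le_mk.2 ⟨le_trans (le_max_left _ _) hm, le_trans (le_max_right _ _) hn⟩
  have hcoefs := hN (m, n) hp
  set p : ℕ × ℕ := (m, n) with hpdef
  -- bounds on the products
  have hzs : ∀ l, ‖z - s l‖ ≤ 3 * R / 16 := by
    intro l
    have h1 : dist z c < R / 16 := mem_ball.1 hz
    have h2 : dist z (s l) ≤ dist z c + dist c (s l) := dist_triangle _ _ _
    rw [dist_comm c (s l)] at h2
    rw [← dist_eq_norm]
    linarith [hsc l]
  have hprod : ∀ i, i ≤ k → ‖∏ l ∈ Finset.range i, (z - s l)‖ ≤ (3 * R / 16) ^ i := by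
    intro i _
    rw [norm_prod]
    calc ∏ l ∈ Finset.range i, ‖z - s l‖ ≤ ∏ l ∈ Finset.range i, (3 * R / 16) :=
          Finset.prod_le_prod (fun l _ => norm_nonneg _) (fun l _ => hzs l)
      _ = (3 * R / 16) ^ i := by rw [Finset.prod_const, Finset.card_range]
  have hprodC : ∀ i, i ≤ k → ((3 * R / 16) ^ i : ℝ) ≤ C := by
    intro i hik
    rw [hC]
    calc ((3 * R / 16) ^ i : ℝ) ≤ (max 1 (3 * R / 16)) ^ i :=
          pow_le_pow_left₀ (by positivity) (le_max_right _ _) _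
      _ ≤ (max 1 (3 * R / 16)) ^ k := pow_le_pow_right₀ (le_max_left _ _) hik
  -- the main estimate
  rw [dist_eq_norm]
  have hNk := hNewton p k z
  have hzcb : z ∈ closedBall c (3 * R / 4) := by
    have : dist z c < R / 16 := mem_ball.1 hz
    exact mem_closedBall.2 (by linarith)
  have hsum : ‖∑ i ∈ Finset.range k, D p i (s i) * ∏ l ∈ Finset.range i, (z - s l)‖
      ≤ ε / 2 := by
    calc ‖∑ i ∈ Finset.range k, D p i (s i) * ∏ l ∈ Finset.range i, (z - s l)‖
        ≤ ∑ i ∈ Finset.range k, ‖D p i (s i) * ∏ l ∈ Finset.range i, (z - s l)‖ :=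
          norm_sum_le _ _
      _ ≤ ∑ i ∈ Finset.range k, ε2 * C := by
          apply Finset.sum_le_sum
          intro i hi
          rw [norm_mul]
          have h1 : ‖D p i (s i)‖ ≤ ε2 := le_of_lt (hcoefs i hi)
          have h2 : ‖∏ l ∈ Finset.range i, (z - s l)‖ ≤ C :=
            le_trans (hprod i (le_of_lt (Finset.mem_range.1 hi)))
              (hprodC i (le_of_lt (Finset.mem_range.1 hi)))
          exact mul_le_mul h1 h2 (norm_nonneg _) (le_of_lt hε2pos)
      _ = k * (ε2 * C) := by rw [Finset.sum_const, Finset.card_range]; ring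
      _ ≤ ε / 2 := by
          have hCne : C ≠ 0 := ne_of_gt hC0
          have he2C : ε2 * C = ε / (2 * ((k:ℝ) + 1)) := by
            rw [hε2]; field_simp
          have h8 : (0:ℝ) < 2 * ((k:ℝ) + 1) := by positivity
          rw [he2C, show (k:ℝ) * (ε / (2 * ((k:ℝ) + 1))) =
            ((k:ℝ) * ε) / (2 * ((k:ℝ) + 1)) from by ring,
            div_le_div_iff₀ h8 two_pos]
          nlinarith [le_of_lt hε]
  have hrem : ‖D p k z * ∏ l ∈ Finset.range k, (z - s l)‖ < ε / 2 := by
    rw [norm_mul]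
    have h1 : ‖D p k z‖ ≤ B k := hDb p k z hzcb
    have h2 : ‖∏ l ∈ Finset.range k, (z - s l)‖ ≤ (3 * R / 16) ^ k := hprod k le_rfl
    have h3 : B k * (3 * R / 16) ^ k = 2 * M * (3 / 5) ^ k := by
      rw [hB, mul_assoc, ← mul_pow]
      congr 2
      field_simp
    calc ‖D p k z‖ * ‖∏ l ∈ Finset.range k, (z - s l)‖ ≤ B k * (3 * R / 16) ^ k := by
          apply mul_le_mul h1 h2 (norm_nonneg _) (by positivity)
      _ = 2 * M * (3 / 5) ^ k := h3
      _ ≤ (2 * M + 1) * (3 / 5) ^ k := by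
          apply mul_le_mul_of_nonneg_right (by linarith) (by positivity)
      _ < ε / 2 := hk
  calc ‖f m z - f n z‖
      = ‖(∑ i ∈ Finset.range k, D p i (s i) * ∏ l ∈ Finset.range i, (z - s l)) +
          D p k z * ∏ l ∈ Finset.range k, (z - s l)‖ := by rw [← hNk]
    _ ≤ ‖∑ i ∈ Finset.range k, D p i (s i) * ∏ l ∈ Finset.range i, (z - s l)‖ +
          ‖D p k z * ∏ l ∈ Finset.range k, (z - s l)‖ := norm_add_le _ _
    _ < ε := by linarith




/-- Vitali-type convergence theorem under a one-sided bound on real parts: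
analytic functions on a connected open set with nonnegative real parts which
converge pointwise on a set with a limit point converge locally uniformly to an
analytic function. -/
theorem vitali_real_part (Ω : Set ℂ) (hΩo : IsOpen Ω) (hΩc : IsConnected Ω)
    (g : ℕ → ℂ → ℂ) (hg : ∀ n, DifferentiableOn ℂ (g n) Ω)
    (hre : ∀ n, ∀ z ∈ Ω, 0 ≤ (g n z).re)
    (S : Set ℂ) (hS : S ⊆ Ω)
    (x₀ : ℂ) (hx₀ : x₀ ∈ Ω) (hacc : x₀ ∈ closure (S \ {x₀}))
    (hconv : ∀ z ∈ S, ∃ l : ℂ, Filter.Tendsto (fun n => g n z) Filter.atTop (nhds l)) :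
    ∃ G : ℂ → ℂ, DifferentiableOn ℂ G Ω ∧
      TendstoLocallyUniformlyOn g G Filter.atTop Ω := by
  classical
  -- ### Step A: locally uniform boundedness everywhere on Ω
  -- propagation: a pointwise bound at a point near z gives a uniform bound near z
  have prop : ∀ z ∈ Ω, ∀ R > (0:ℝ), ball z R ⊆ Ω → ∀ v ∈ ball z (R / 4),
      ∀ M0 : ℝ, (∀ n, ‖g n v‖ ≤ M0) →
      ∃ r > (0:ℝ), ball z r ⊆ Ω ∧ ∃ M, ∀ n, ∀ w ∈ ball z r, ‖g n w‖ ≤ M := by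
    intro z hz R hR hRΩ v hv M0 hM0
    have hsub : ball v (3 * R / 4) ⊆ ball z R := by
      intro w hw
      rw [mem_ball] at hw hv ⊢
      calc dist w z ≤ dist w v + dist v z := dist_triangle _ _ _
        _ < 3 * R / 4 + R / 4 := add_lt_add hw hv
        _ = R := by ring
    have hbd : ∀ n, ∀ w ∈ ball v (3 * R / 8), ‖g n w‖ ≤ 3 * M0 := by
      intro n w hw
      have h1 := halfplane_bound ((hg n).mono (hsub.trans hRΩ))
        (fun u hu => hre n u (hRΩ (hsub hu))) w
        (by rw [show (3 * R / 4) / 2 = 3 * R / 8 by ring]; exact hw)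
      calc ‖g n w‖ ≤ 3 * ‖g n v‖ := h1
        _ ≤ 3 * M0 := by linarith [hM0 n]
    refine ⟨R / 8, by linarith, fun w hw => hRΩ (ball_subset_ball (by linarith) hw),
      3 * M0, fun n w hw => hbd n w ?_⟩
    rw [mem_ball] at hw hv ⊢
    calc dist w v ≤ dist w z + dist z v := dist_triangle _ _ _
      _ = dist w z + dist v z := by rw [dist_comm z v]
      _ < R / 8 + R / 4 := add_lt_add hw hv
      _ = 3 * R / 8 := by ring
  set V : Set ℂ := {z : ℂ | ∃ r > (0:ℝ), ball z r ⊆ Ω ∧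
      ∃ M, ∀ n, ∀ w ∈ ball z r, ‖g n w‖ ≤ M} with hV
  have hVopen : IsOpen V := by
    rw [Metric.isOpen_iff]
    rintro z ⟨r, hr, hrΩ, M, hM⟩
    refine ⟨r, hr, fun z' hz' => ?_⟩
    have h1 : ball z' (r - dist z' z) ⊆ ball z r := by
      intro w hw
      rw [mem_ball] at hw ⊢
      calc dist w z ≤ dist w z' + dist z' z := dist_triangle _ _ _
        _ < (r - dist z' z) + dist z' z := by linarith
        _ = r := by ring
    exact ⟨r - dist z' z, by rw [mem_ball] at hz'; linarith, h1.trans hrΩ,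
      M, fun n w hw => hM n w (h1 hw)⟩
  have hVsub : V ⊆ Ω := by
    rintro z ⟨r, hr, hrΩ, _⟩
    exact hrΩ (mem_ball_self hr)
  have hVclosed : ∀ z ∈ Ω, z ∈ closure V → z ∈ V := by
    intro z hz hcz
    rcases Metric.isOpen_iff.1 hΩo z hz with ⟨R, hR, hRΩ⟩
    rcases Metric.mem_closure_iff.1 hcz (R / 4) (by linarith) with ⟨v, hvV, hvd⟩
    rcases hvV with ⟨rv, hrv, hrvΩ, Mv, hMv⟩
    have hvb : ∀ n, ‖g n v‖ ≤ Mv := fun n => hMv n v (mem_ball_self hrv)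
    exact prop z hz R hR hRΩ v (by rwa [mem_ball, dist_comm]) Mv hvb
  -- a point of S where the sequence is bounded
  have hSne : (S \ {x₀}).Nonempty := by
    by_contra h
    rw [not_nonempty_iff_eq_empty] at h
    rw [h, closure_empty] at hacc
    exact hacc
  rcases hSne with ⟨s₀, hs₀⟩
  have hs₀S : s₀ ∈ S := hs₀.1
  have hs₀Ω : s₀ ∈ Ω := hS hs₀S
  rcases hconv s₀ hs₀S with ⟨l₀, hl₀⟩
  have hbdd₀ : ∃ M0, ∀ n, ‖g n s₀‖ ≤ M0 := by
    have h1 : Tendsto (fun n => ‖g n s₀‖) atTop (𝓝 ‖l₀‖) := hl₀.norm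
    rcases h1.bddAbove_range with ⟨M0, hM0⟩
    exact ⟨M0, fun n => hM0 (mem_range_self n)⟩
  rcases hbdd₀ with ⟨M0, hM0⟩
  have hs₀V : s₀ ∈ V := by
    rcases Metric.isOpen_iff.1 hΩo s₀ hs₀Ω with ⟨R, hR, hRΩ⟩
    exact prop s₀ hs₀Ω R hR hRΩ s₀ (mem_ball_self (by linarith)) M0 hM0
  -- connectedness: V covers Ω
  have hconn : ∀ (U : Set ℂ), IsOpen U → U ⊆ Ω → (∀ z ∈ Ω, z ∈ closure U → z ∈ U) →
      U.Nonempty → ∀ z ∈ Ω, z ∈ U := by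
    intro U hUo hUsub hUcl ⟨u₀, hu₀⟩ z hz
    by_contra hzU
    have hcover : Ω ⊆ U ∪ (closure U)ᶜ := by
      intro w hw
      by_cases h : w ∈ closure U
      · exact Or.inl (hUcl w hw h)
      · exact Or.inr h
    have h1 := hΩc.isPreconnected U (closure U)ᶜ hUo (isClosed_closure.isOpen_compl)
      hcover ⟨u₀, hUsub hu₀, hu₀⟩
      ⟨z, hz, fun h => hzU (hUcl z hz h)⟩
    rcases h1 with ⟨w, _, hw1, hw2⟩
    exact hw2 (subset_closure hw1)
  have hΩV : ∀ z ∈ Ω, z ∈ V := hconn V hVopen hVsub hVclosed ⟨s₀, hs₀V⟩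
  -- ### Step B: locally uniform Cauchy everywhere on Ω
  set W : Set ℂ := {z : ℂ | ∃ r > (0:ℝ), ball z r ⊆ Ω ∧
      UniformCauchySeqOn g atTop (ball z r)} with hW
  have hWopen : IsOpen W := by
    rw [Metric.isOpen_iff]
    rintro z ⟨r, hr, hrΩ, hUC⟩
    refine ⟨r, hr, fun z' hz' => ?_⟩
    have h1 : ball z' (r - dist z' z) ⊆ ball z r := by
      intro w hw
      rw [mem_ball] at hw ⊢
      calc dist w z ≤ dist w z' + dist z' z := dist_triangle _ _ _
        _ < (r - dist z' z) + dist z' z := by linarith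
        _ = r := by ring
    exact ⟨r - dist z' z, by rw [mem_ball] at hz'; linarith, h1.trans hrΩ, hUC.mono h1⟩
  have hWsub : W ⊆ Ω := by
    rintro z ⟨r, hr, hrΩ, _⟩
    exact hrΩ (mem_ball_self hr)
  -- x₀ ∈ W
  have hx₀W : x₀ ∈ W := by
    rcases hΩV x₀ hx₀ with ⟨r, hr, hrΩ, M, hM⟩
    have hT : ∀ z ∈ S ∩ ball x₀ r, ∃ l, Tendsto (fun n => g n z) atTop (𝓝 l) :=
      fun z hz => hconv z hz.1
    have hacc' : x₀ ∈ closure ((S ∩ ball x₀ r) \ {x₀}) := by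
      rw [mem_closure_iff_nhds]
      intro U hU
      rcases mem_closure_iff_nhds.1 hacc (U ∩ ball x₀ r)
        (inter_mem hU (ball_mem_nhds _ hr)) with ⟨y, ⟨hyU, hyb⟩, hyS, hyx⟩
      exact ⟨y, hyU, ⟨hyS, hyb⟩, hyx⟩
    have hUC := local_uniform_cauchy hr (fun n => (hg n).mono hrΩ) hM hT
      (t := x₀) (by simpa using by positivity : dist x₀ x₀ < r / 16) hacc'
    exact ⟨r / 16, by linarith, (ball_subset_ball (by linarith)).trans hrΩ, hUC⟩
  -- closedness of W in Ω
  have hWclosed : ∀ z ∈ Ω, z ∈ closure W → z ∈ W := by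
    intro z hz hcz
    rcases hΩV z hz with ⟨r, hr, hrΩ, M, hM⟩
    rcases Metric.mem_closure_iff.1 hcz (r / 16) (by linarith) with ⟨w, hwW, hwd⟩
    rcases hwW with ⟨rw, hrw, hrwΩ, hUCw⟩
    set r' : ℝ := min rw (r / 16) with hr'
    have hr'0 : 0 < r' := lt_min hrw (by linarith)
    have hT : ∀ y ∈ ball w r', ∃ l, Tendsto (fun n => g n y) atTop (𝓝 l) := by
      intro y hy
      have h1 : CauchySeq fun n => g n y :=
        hUCw.cauchySeq (ball_subset_ball (min_le_left _ _) hy)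
      exact cauchySeq_tendsto_of_complete h1
    have hwz : dist w z < r / 16 := by rwa [dist_comm] at hwd
    have hwacc : w ∈ closure (ball w r' \ {w}) := by
      rw [Metric.mem_closure_iff]
      intro ε hε
      set a : ℝ := min ε r' / 2 with ha
      have ha0 : 0 < a := by positivity
      refine ⟨w + (a : ℂ), ⟨?_, ?_⟩, ?_⟩
      · rw [mem_ball, dist_eq_norm, add_sub_cancel_left]
        have : ‖((a : ℝ) : ℂ)‖ = a := by
          rw [Complex.norm_real, Real.norm_eq_abs, abs_of_pos ha0]
        rw [this]
        have := min_le_right ε r'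
        calc a = min ε r' / 2 := rfl
          _ < min ε r' := by linarith [lt_min hε hr'0]
          _ ≤ r' := min_le_right _ _
      · simp only [mem_singleton_iff]
        intro h
        have : ((a : ℝ) : ℂ) = 0 := by linear_combination h
        exact absurd (Complex.ofReal_eq_zero.1 this) (ne_of_gt ha0)
      · rw [dist_eq_norm]
        have h2 : w - (w + (a:ℂ)) = -(a:ℂ) := by ring
        rw [h2, norm_neg]
        have : ‖((a : ℝ) : ℂ)‖ = a := by
          rw [Complex.norm_real, Real.norm_eq_abs, abs_of_pos ha0]
        rw [this]
        calc a = min ε r' / 2 := rfl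
          _ < min ε r' := by linarith [lt_min hε hr'0]
          _ ≤ ε := min_le_left _ _
    have hUC := local_uniform_cauchy hr (fun n => (hg n).mono hrΩ) hM
      (fun y hy => hT y hy) (t := w) hwz ?_
    · exact ⟨r / 16, by linarith, (ball_subset_ball (by linarith)).trans hrΩ, hUC⟩
    · -- need : w ∈ closure ((ball w r') \ {w}) where T = ball w r' viewed inside ball z r
      exact hwacc
  have hΩW : ∀ z ∈ Ω, z ∈ W := hconn W hWopen hWsub hWclosed ⟨x₀, hx₀W⟩
  -- ### limit function and conclusion
  have hptwise : ∀ z ∈ Ω, ∃ l, Tendsto (fun n => g n z) atTop (𝓝 l) := by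
    intro z hz
    rcases hΩW z hz with ⟨r, hr, _, hUC⟩
    exact cauchySeq_tendsto_of_complete (hUC.cauchySeq (mem_ball_self hr))
  set G : ℂ → ℂ := fun z =>
    if h : ∃ l, Tendsto (fun n => g n z) atTop (𝓝 l) then h.choose else 0 with hG
  have hGt : ∀ z ∈ Ω, Tendsto (fun n => g n z) atTop (𝓝 (G z)) := by
    intro z hz
    have h := hptwise z hz
    rw [hG]
    simp only [dif_pos h]
    exact h.choose_spec
  have hTLU : TendstoLocallyUniformlyOn g G atTop Ω := by
    intro u hu x hx
    rcases hΩW x hx with ⟨r, hr, hrΩ, hUC⟩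
    have hTU : TendstoUniformlyOn g G atTop (ball x r) :=
      hUC.tendstoUniformlyOn_of_tendsto (fun y hy => hGt y (hrΩ hy))
    exact ⟨ball x r,
      mem_nhdsWithin_of_mem_nhds (isOpen_ball.mem_nhds (mem_ball_self hr)), hTU u hu⟩
  exact ⟨G, hTLU.differentiableOn (Filter.Eventually.of_forall hg) hΩo, hTLU⟩
end

section
/- Let f be analytic on the right half plane H₊ = {h : Re h > 0} with Re f(h) > 0 for all h ∈ H₊, and suppose f(1) is real. Define α(h) = (|1+h| + |1−h|)/(|1+h| − |1−h|) for h ∈ H₊. Then for all h ∈ H₊: α(h)⁻¹ f(1) ≤ |f(h)| ≤ α(h) f(1). -/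
open Complex Metric

private lemma abs_sub_lt_abs_add' {w : ℂ} {a : ℝ} (hw : 0 < w.re) (ha : 0 < a) :
    ‖w - a‖ < ‖w + a‖ := by
  have hsq : ‖w - a‖ ^ 2 < ‖w + a‖ ^ 2 := by
    rw [Complex.sq_norm, Complex.sq_norm, Complex.normSq_apply, Complex.normSq_apply]
    simp only [Complex.sub_re, Complex.sub_im, Complex.add_re, Complex.add_im,
      Complex.ofReal_re, Complex.ofReal_im]
    nlinarith
  exact lt_of_pow_lt_pow_left₀ 2 (norm_nonneg _) hsq

/-- Two-sided bound for analytic functions on the right half plane with positive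
real part, normalized to be real at `h = 1`. -/
theorem half_plane_bound (f : ℂ → ℂ)
    (hf : DifferentiableOn ℂ f {h : ℂ | 0 < h.re})
    (hre : ∀ h : ℂ, 0 < h.re → 0 < (f h).re)
    (h1 : (f 1).im = 0) :
    ∀ h : ℂ, 0 < h.re →
      ((‖1 + h‖ + ‖1 - h‖) /
          (‖1 + h‖ - ‖1 - h‖))⁻¹ * (f 1).re ≤
          ‖f h‖ ∧
        ‖f h‖ ≤
          (‖1 + h‖ + ‖1 - h‖) /
              (‖1 + h‖ - ‖1 - h‖) * (f 1).re := by
  intro h hh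
  set c : ℂ := f 1 with hc
  have hC : 0 < c.re := hre 1 (by norm_num)
  have hc_eq : c = (c.re : ℂ) := Complex.ext (by simp) (by simpa using h1)
  set ψ : ℂ → ℂ := fun z => (1 + z) / (1 - z) with hψdef
  -- ψ maps the unit ball into the right half plane
  have hball : ∀ z ∈ ball (0 : ℂ) 1, 0 < (ψ z).re := by
    intro z hz
    rw [mem_ball_zero_iff] at hz
    have hns : Complex.normSq z < 1 := by
      have hza : ‖z‖ < 1 := by exact hz
      have h2 := Complex.sq_norm z; nlinarith [norm_nonneg z]
    have h1z : (1 : ℂ) - z ≠ 0 := by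
      intro hEq
      have hz1 : z = 1 := by linear_combination -hEq
      simp [hz1, Complex.normSq_apply] at hns
    have hpos : 0 < Complex.normSq (1 - z) := Complex.normSq_pos.2 h1z
    have hre : (ψ z).re = (1 - Complex.normSq z) / Complex.normSq (1 - z) := by
      simp only [hψdef]
      rw [Complex.div_re]
      simp only [Complex.add_re, Complex.add_im, Complex.sub_re, Complex.sub_im,
        Complex.one_re, Complex.one_im, Complex.normSq_apply]
      ring
    rw [hre]
    exact div_pos (by linarith) hpos
  have hne1 : ∀ z ∈ ball (0 : ℂ) 1, (1 : ℂ) - z ≠ 0 := by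
    intro z hz hEq
    rw [mem_ball_zero_iff] at hz
    have hz1 : z = 1 := by linear_combination -hEq
    simp [hz1] at hz
  -- the composed map
  set G : ℂ → ℂ := fun z => (f (ψ z) - c) / (f (ψ z) + c) with hGdef
  have hden : ∀ z ∈ ball (0 : ℂ) 1, f (ψ z) + c ≠ 0 := by
    intro z hz hEq
    have h1 : 0 < (f (ψ z)).re := hre _ (hball z hz)
    have : (f (ψ z) + c).re = 0 := by rw [hEq]; simp
    simp only [Complex.add_re] at this
    linarith
  have hGd : DifferentiableOn ℂ G (ball (0 : ℂ) 1) := by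
    have hψd : DifferentiableOn ℂ ψ (ball (0 : ℂ) 1) := by
      apply DifferentiableOn.div
      · exact (differentiableOn_const _).add differentiableOn_id
      · exact (differentiableOn_const _).sub differentiableOn_id
      · exact hne1
    have hfψ : DifferentiableOn ℂ (fun z => f (ψ z)) (ball (0 : ℂ) 1) :=
      hf.comp hψd (fun z hz => hball z hz)
    exact ((hfψ.sub (differentiableOn_const _)).div
      (hfψ.add (differentiableOn_const _)) hden)
  have hGmaps : Set.MapsTo G (ball (0 : ℂ) 1) (ball (0 : ℂ) 1) := by
    intro z hz
    rw [mem_ball_zero_iff]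
    have hw : 0 < (f (ψ z)).re := hre _ (hball z hz)
    have hlt : ‖f (ψ z) - c‖ < ‖f (ψ z) + c‖ := by
      rw [hc_eq]; exact abs_sub_lt_abs_add' hw hC
    have hd0 : 0 < ‖f (ψ z) + c‖ :=
      (norm_pos_iff.2 (hden z hz))
    simp only [hGdef, norm_div]
    rw [div_lt_one hd0]
    exact hlt
  have hG0 : G 0 = 0 := by
    have hψ0 : ψ 0 = 1 := by simp [hψdef]
    simp [hGdef, hψ0, hc]
  -- the point z corresponding to h
  have hh1 : (h + 1) ≠ 0 := by
    intro hEq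
    have : (h + 1).re = 0 := by rw [hEq]; simp
    simp only [Complex.add_re, Complex.one_re] at this
    linarith
  set z : ℂ := (h - 1) / (h + 1) with hzdef
  have hzabs : ‖z‖ < 1 := by
    have hlt : ‖h - 1‖ < ‖h + 1‖ := by
      have := abs_sub_lt_abs_add' (w := h) (a := 1) hh one_pos
      simpa using this
    simp only [hzdef, norm_div]
    rw [div_lt_one (norm_pos_iff.2 hh1)]
    exact hlt
  have hψz : ψ z = h := by
    simp only [hψdef, hzdef]
    field_simp
    ring
  -- Schwarz lemma
  have hSch := Complex.norm_le_norm_of_mapsTo_ball hGd (hGmaps.mono_right ball_subset_closedBall) hG0 hzabs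
  have hzball : z ∈ ball (0 : ℂ) 1 := mem_ball_zero_iff.2 hzabs
  have hkey : ‖h + 1‖ * ‖f h - c‖ ≤
      ‖h - 1‖ * ‖f h + c‖ := by
    have hGz : ‖G z‖ = ‖f h - c‖ / ‖f h + c‖ := by
      simp only [hGdef, hψz, norm_div]
    have hz' : ‖z‖ = ‖h - 1‖ / ‖h + 1‖ := by
      simp only [hzdef, norm_div]
    rw [hGz, hz'] at hSch
    have hd1 : 0 < ‖f h + c‖ := by
      have := hden z hzball; rw [hψz] at this
      exact norm_pos_iff.2 this
    have hd2 : 0 < ‖h + 1‖ := norm_pos_iff.2 hh1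
    rw [div_le_div_iff₀ hd1 hd2] at hSch
    linarith
  -- final arithmetic
  set A := ‖1 + h‖ with hA
  set B := ‖1 - h‖ with hB
  set F := ‖f h‖ with hF
  set C := c.re with hCdef
  have hAB : B < A := by
    have := abs_sub_lt_abs_add' (w := h) (a := 1) hh one_pos
    calc B = ‖h - 1‖ := by rw [hB, ← norm_neg]; ring_nf
    _ < ‖h + 1‖ := by simpa using this
    _ = A := by rw [hA]; ring_nf
  have hBnn : 0 ≤ B := norm_nonneg _
  have hkey' : A * ‖f h - c‖ ≤ B * ‖f h + c‖ := by
    have e1 : A = ‖h + 1‖ := by rw [hA]; ring_nf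
    have e2 : B = ‖h - 1‖ := by
      rw [hB, ← norm_neg]; ring_nf
    rw [e1, e2]; exact hkey
  have habsc : ‖c‖ = C := by
    rw [hc_eq]; simp [abs_of_pos hC, hCdef]; exact hC.le
  have t1 : F - C ≤ ‖f h - c‖ := by
    have := norm_sub_norm_le (f h) c
    simpa [habsc, hF] using this
  have t2 : C - F ≤ ‖f h - c‖ := by
    have := norm_sub_norm_le c (f h)
    rw [norm_sub_rev] at this
    simpa [habsc, hF] using this
  have t3 : ‖f h + c‖ ≤ F + C := by
    have := norm_add_le (f h) c
    simpa [habsc, hF] using this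
  have habs_nn : 0 ≤ ‖f h - c‖ := norm_nonneg _
  constructor
  · rw [inv_div, div_mul_eq_mul_div, div_le_iff₀ (by linarith : (0:ℝ) < A + B)]
    nlinarith
  · rw [div_mul_eq_mul_div, le_div_iff₀ (by linarith : (0:ℝ) < A - B)]
    nlinarith
end

section
/- Fix R > 0 and sets A₁,…,A_k ⊂ ℤ^ν, each with diameter at most R (diam A = max_{j,m∈A}|j−m| in some fixed norm). If p, ℓ ∈ ℤ^ν satisfy |p − ℓ| > kR, then the index set {1,…,k} can be partitioned into P and Q such that ({p} ∪ ⋃_{j∈P} A_j) and ({ℓ} ∪ ⋃_{j∈Q} A_j) are disjoint. -/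
/-- Geometric separation lemma: sets `A₁,…,A_k ⊂ ℤ^ν` of diameter at most `R`
can be split into two groups, one staying away from `ℓ` together with `p`, the
other staying away from `p` together with `ℓ`, whenever `‖p - ℓ‖ > k R`. -/
theorem separation_lemma (ν k : ℕ) (R : ℝ) (hR : 0 < R)
    (A : Fin k → Finset (Fin ν → ℤ)) (hne : ∀ j, (A j).Nonempty)
    (hdiam : ∀ j, ∀ x ∈ A j, ∀ y ∈ A j, ‖x - y‖ ≤ R)
    (p ℓ : Fin ν → ℤ) (hfar : (k : ℝ) * R < ‖p - ℓ‖) :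
    ∃ P Q : Finset (Fin k), P ∪ Q = Finset.univ ∧ Disjoint P Q ∧
      Disjoint
        (insert p (⋃ j ∈ (P : Set (Fin k)), (A j : Set (Fin ν → ℤ))))
        (insert ℓ (⋃ j ∈ (Q : Set (Fin k)), (A j : Set (Fin ν → ℤ)))) := by
  classical
  have hR0 : (0:ℝ) ≤ R := hR.le
  have hpl : p ≠ ℓ := by
    have h0 : (0:ℝ) ≤ (k:ℝ) * R := by positivity
    have hpos : (0:ℝ) < ‖p - ℓ‖ := lt_of_le_of_lt h0 hfar
    intro h; rw [h, sub_self, norm_zero] at hpos; exact lt_irrefl _ hpos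
  rcases Nat.eq_zero_or_pos k with hk | hk
  · subst hk
    refine ⟨∅, ∅, by simp, by simp, by simp [hpl]⟩
  set F : Finset (Fin k) → Finset (Fin k) := fun S =>
    S ∪ Finset.univ.filter (fun j => ∃ j' ∈ S, (A j ∩ A j').Nonempty) with hF
  set P0 : Finset (Fin k) := Finset.univ.filter (fun j => p ∈ A j) with hP0
  set Pn : ℕ → Finset (Fin k) := fun n => F^[n] P0 with hPn
  have hsucc : ∀ n, Pn (n+1) = F (Pn n) := fun n => Function.iterate_succ_apply' F n P0
  have hsub : ∀ S, S ⊆ F S := fun S => Finset.subset_union_left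
  have hmemF : ∀ S j, j ∈ F S ↔ j ∈ S ∨ ∃ j' ∈ S, (A j ∩ A j').Nonempty := by
    intro S j; simp [hF]
  have hmono : ∀ n, P0 ⊆ Pn n := by
    intro n
    induction n with
    | zero => simp [hPn]
    | succ n ih => rw [hsucc]; exact ih.trans (hsub _)
  -- distance bound along chains
  have hbound : ∀ n, ∀ j ∈ Pn n, ∀ x ∈ A j, ‖p - x‖ ≤ ((n:ℝ)+1) * R := by
    intro n
    induction n with
    | zero =>
      intro j hj x hx
      have hpj : p ∈ A j := by simpa [hPn, hP0] using hj
      simpa using hdiam j p hpj x hx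
    | succ n ih =>
      intro j hj x hx
      rw [hsucc, hmemF] at hj
      rcases hj with hj | ⟨j', hj', y, hy⟩
      · have h1 := ih j hj x hx
        push_cast
        nlinarith
      · simp only [Finset.mem_inter] at hy
        have h1 : ‖p - y‖ ≤ ((n:ℝ)+1) * R := ih j' hj' y hy.2
        have h2 : ‖y - x‖ ≤ R := hdiam j y hy.1 x hx
        have h3 : ‖p - x‖ ≤ ‖p - y‖ + ‖y - x‖ := by
          calc ‖p - x‖ = ‖(p - y) + (y - x)‖ := by rw [sub_add_sub_cancel]
            _ ≤ ‖p - y‖ + ‖y - x‖ := norm_add_le _ _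
        push_cast
        nlinarith
  -- stabilization
  have hfix : ∀ n, F (Pn n) = Pn n ∨ (n+1) ≤ (Pn n).card := by
    intro n
    induction n with
    | zero =>
      by_cases h : P0 = ∅
      · left
        have h0 : Pn 0 = ∅ := by simp [hPn, h]
        rw [h0]
        ext j
        simp [hmemF]
      · right
        have hne' : (Pn 0).Nonempty := by
          simpa [hPn, Finset.nonempty_iff_ne_empty] using h
        simpa using Finset.card_pos.mpr hne'
    | succ n ih =>
      by_cases h : F (Pn (n+1)) = Pn (n+1)
      · left; exact h
      · right
        have hne' : F (Pn n) ≠ Pn n := by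
          intro he
          apply h
          have h2 : Pn (n+1) = Pn n := (hsucc n).trans he
          rw [h2]; exact he
        have hc : n + 1 ≤ (Pn n).card := ih.resolve_left hne'
        have hss : Pn n ⊂ F (Pn n) :=
          (Finset.ssubset_iff_of_subset (hsub _)).mpr (by
            rcases Finset.exists_of_ssubset (lt_of_le_of_ne (hsub _) (Ne.symm hne')) with ⟨a, ha, hna⟩
            exact ⟨a, ha, hna⟩)
        have hlt : (Pn n).card < (F (Pn n)).card := Finset.card_lt_card hss
        rw [hsucc]
        omega
  have hfixed : F (Pn (k-1)) = Pn (k-1) := by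
    rcases hfix (k-1) with h | h
    · exact h
    · have h1 : (Pn (k-1)).card ≤ k := by
        have := Finset.card_le_univ (Pn (k-1))
        simpa using this
      have h2 : (Pn (k-1)).card = Fintype.card (Fin k) := by
        simp only [Fintype.card_fin]
        omega
      have huniv : Pn (k-1) = Finset.univ := Finset.eq_univ_of_card _ h2
      rw [huniv]
      exact Finset.Subset.antisymm (Finset.subset_univ _) (hsub _)
  -- the key bound for members of the final set
  have hkey : ∀ j ∈ Pn (k-1), ∀ x ∈ A j, ‖p - x‖ ≤ (k:ℝ) * R := by
    intro j hj x hx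
    have hb := hbound (k-1) j hj x hx
    have hcast : ((k-1:ℕ):ℝ) + 1 = (k:ℝ) := by
      have h := Nat.succ_pred_eq_of_pos hk
      exact_mod_cast congrArg (Nat.cast (R := ℝ)) h
    rwa [hcast] at hb
  refine ⟨Pn (k-1), (Pn (k-1))ᶜ, Finset.union_compl _, disjoint_compl_right, ?_⟩
  rw [Set.disjoint_left]
  rintro x hx hx'
  simp only [Set.mem_insert_iff, Set.mem_iUnion, exists_prop, Finset.mem_coe,
    Finset.coe_compl, Set.mem_compl_iff] at hx hx'
  rcases hx with rfl | ⟨j, hj, hxj⟩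
  · rcases hx' with rfl | ⟨j', hj', hxj'⟩
    · exact hpl rfl
    · have : j' ∈ P0 := by simp [hP0, hxj']
      exact hj' (hmono (k-1) this)
  · rcases hx' with rfl | ⟨j', hj', hxj'⟩
    · have := hkey j hj x hxj
      exact absurd hfar (not_lt.mpr this)
    · apply hj'
      rw [← hfixed, hmemF]
      exact Or.inr ⟨j, hj, x, Finset.mem_inter.mpr ⟨hxj', hxj⟩⟩
end
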